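/- Let ε > 0, a, f as above with b(x,y,u,·) := a(x,y,u,·)⁻¹, and suppose (u, v) ∈ C([0,1]; ℝⁿ)², ‖u‖_∞ < 1, satisfies the integral system u(x) = ∫₀ˣ b(y, y/ε, u(y), v(y)) dy and v(x) = −∫ₓ¹ f(y, y/ε, u(y), b(y, y/ε, u(y), v(y))) dy. Then u ∈ C¹([0,1]; ℝⁿ) with u' (x) = b(x, x/ε, u(x), v(x)), v(x) = a(x, x/ε, u(x), u'(x)), v(1) = 0, and u is a weak solution of the boundary value problem a(x, x/ε, u, u')' = f(x, x/ε, u, u') on [0,1] with u(0) = 0, a(1, 1/ε, u(1), u'(1)) = 0. -/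

import Mathlib

open RealInnerProductSpace Set intervalIntegral MeasureTheory

theorem ftc_helper {E : Type*} [NormedAddCommGroup E] [NormedSpace ℝ E] [CompleteSpace E]
    {g : ℝ → E} (hg : ContinuousOn g (Icc 0 1)) {c : ℝ} (hc : c ∈ Icc (0:ℝ) 1)
    (x : ℝ) (hx : x ∈ Icc (0:ℝ) 1) :
    HasDerivWithinAt (fun t => ∫ y in c..t, g y) (g x) (Icc 0 1) x := by
  classical
  set g' : ℝ → E := IccExtend zero_le_one ((Icc 0 1).restrict g) with hg'
  have hgc : Continuous g' := (continuousOn_iff_continuous_restrict.mp hg).comp continuous_projIcc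
  have hmem : ∀ y ∈ Icc (0:ℝ) 1, g' y = g y := fun y hy => by
    simp [hg', IccExtend_of_mem _ _ hy, restrict]
  have hD : HasDerivAt (fun t => ∫ y in c..t, g' y) (g' x) x :=
    integral_hasDerivAt_right (hgc.intervalIntegrable c x)
      hgc.stronglyMeasurable.stronglyMeasurableAtFilter hgc.continuousAt
  have hDW : HasDerivWithinAt (fun t => ∫ y in c..t, g' y) (g x) (Icc 0 1) x := by
    rw [← hmem x hx]; exact hD.hasDerivWithinAt
  have key : ∀ y ∈ Icc (0:ℝ) 1, (∫ z in c..y, g z) = ∫ z in c..y, g' z := fun y hy =>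
    integral_congr fun z hz => ((hmem z (uIcc_subset_Icc hc hy hz)).symm)
  exact hDW.congr (fun y hy => key y hy) (key x hx)

theorem stmt13 {n : ℕ} (ε : ℝ) (hε : 0 < ε)
    (a f b : ℝ → ℝ → EuclideanSpace ℝ (Fin n) → EuclideanSpace ℝ (Fin n) →
      EuclideanSpace ℝ (Fin n))
    (hacont : ContinuousOn
      (fun p : ℝ × ℝ × EuclideanSpace ℝ (Fin n) × EuclideanSpace ℝ (Fin n) =>
        a p.1 p.2.1 p.2.2.1 p.2.2.2)
      (Icc 0 1 ×ˢ (univ : Set (ℝ × EuclideanSpace ℝ (Fin n) × EuclideanSpace ℝ (Fin n)))))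
    (hfcont : ContinuousOn
      (fun p : ℝ × ℝ × EuclideanSpace ℝ (Fin n) × EuclideanSpace ℝ (Fin n) =>
        f p.1 p.2.1 p.2.2.1 p.2.2.2)
      (Icc 0 1 ×ˢ (univ : Set (ℝ × EuclideanSpace ℝ (Fin n) × EuclideanSpace ℝ (Fin n)))))
    (hbcont : ContinuousOn
      (fun p : ℝ × ℝ × EuclideanSpace ℝ (Fin n) × EuclideanSpace ℝ (Fin n) =>
        b p.1 p.2.1 p.2.2.1 p.2.2.2)
      (Icc 0 1 ×ˢ ((univ : Set ℝ) ×ˢ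
        ({uu : EuclideanSpace ℝ (Fin n) | ‖uu‖ ≤ 1} ×ˢ (univ : Set (EuclideanSpace ℝ (Fin n)))))))
    (hinv : ∀ x ∈ Icc (0:ℝ) 1, ∀ (y : ℝ) (uu : EuclideanSpace ℝ (Fin n)), ‖uu‖ ≤ 1 →
      ∀ w : EuclideanSpace ℝ (Fin n), a x y uu (b x y uu w) = w ∧ b x y uu (a x y uu w) = w)
    (u v : ℝ → EuclideanSpace ℝ (Fin n))
    (hucont : ContinuousOn u (Icc 0 1)) (hvcont : ContinuousOn v (Icc 0 1))
    (husmall : ∀ x ∈ Icc (0:ℝ) 1, ‖u x‖ < 1)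
    (hueq : ∀ x ∈ Icc (0:ℝ) 1, u x = ∫ y in (0:ℝ)..x, b y (y / ε) (u y) (v y))
    (hveq : ∀ x ∈ Icc (0:ℝ) 1,
      v x = -∫ y in x..(1:ℝ), f y (y / ε) (u y) (b y (y / ε) (u y) (v y))) :
    u 0 = 0 ∧
    (∀ x ∈ Icc (0:ℝ) 1, HasDerivWithinAt u (b x (x / ε) (u x) (v x)) (Icc 0 1) x) ∧
    (∀ x ∈ Icc (0:ℝ) 1, v x = a x (x / ε) (u x) (b x (x / ε) (u x) (v x))) ∧
    v 1 = 0 ∧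
    a 1 (1 / ε) (u 1) (b 1 (1 / ε) (u 1) (v 1)) = 0 ∧
    (∀ φ φ' : ℝ → EuclideanSpace ℝ (Fin n),
      (∀ x ∈ Icc (0:ℝ) 1, HasDerivWithinAt φ (φ' x) (Icc 0 1) x) →
      ContinuousOn φ' (Icc 0 1) → φ 0 = 0 →
      (∫ x in (0:ℝ)..1, (⟪a x (x / ε) (u x) (b x (x / ε) (u x) (v x)), φ' x⟫
        + ⟪f x (x / ε) (u x) (b x (x / ε) (u x) (v x)), φ x⟫)) = 0) := by

  have h01 : (0:ℝ) ∈ Icc (0:ℝ) 1 := ⟨le_rfl, zero_le_one⟩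
  have h11 : (1:ℝ) ∈ Icc (0:ℝ) 1 := ⟨zero_le_one, le_rfl⟩
  -- the composed functions
  set g : ℝ → EuclideanSpace ℝ (Fin n) := fun x => b x (x / ε) (u x) (v x) with hgdef
  set h : ℝ → EuclideanSpace ℝ (Fin n) := fun x => f x (x / ε) (u x) (g x) with hhdef
  have hmap : ContinuousOn (fun x : ℝ => (x, (x / ε, (u x, v x)))) (Icc 0 1) :=
    (continuousOn_id).prodMk ((continuousOn_id.div_const ε).prodMk (hucont.prodMk hvcont))
  have hgcont : ContinuousOn g (Icc 0 1) := by
    refine hbcont.comp hmap (fun x hx => ?_)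
    exact ⟨hx, mem_univ _, (husmall x hx).le, mem_univ _⟩
  have hhcont : ContinuousOn h (Icc 0 1) := by
    refine hfcont.comp ((continuousOn_id).prodMk
      ((continuousOn_id.div_const ε).prodMk (hucont.prodMk hgcont))) (fun x hx => ?_)
    exact ⟨hx, mem_univ _⟩
  -- u' = g within Icc
  have hu' : ∀ x ∈ Icc (0:ℝ) 1, HasDerivWithinAt u (g x) (Icc 0 1) x := by
    intro x hx
    refine (ftc_helper hgcont h01 x hx).congr (fun y hy => hueq y hy) (hueq x hx)
  -- v' = h within Icc
  have hveq' : ∀ x ∈ Icc (0:ℝ) 1, v x = ∫ y in (1:ℝ)..x, h y := by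
    intro x hx
    rw [hveq x hx, ← intervalIntegral.integral_symm]
  have hv' : ∀ x ∈ Icc (0:ℝ) 1, HasDerivWithinAt v (h x) (Icc 0 1) x := by
    intro x hx
    refine (ftc_helper hhcont h11 x hx).congr (fun y hy => hveq' y hy) (hveq' x hx)
  have hu0 : u 0 = 0 := by simpa using hueq 0 h01
  have hv1 : v 1 = 0 := by simpa using hveq 1 h11
  have hva : ∀ x ∈ Icc (0:ℝ) 1, v x = a x (x / ε) (u x) (g x) := fun x hx =>
    ((hinv x hx (x / ε) (u x) (husmall x hx).le (v x)).1).symm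
  refine ⟨hu0, hu', hva, hv1, by rw [← hva 1 h11, hv1], ?_⟩
  intro φ φ' hφ hφ'cont hφ0
  have hφcont : ContinuousOn φ (Icc 0 1) := fun x hx => (hφ x hx).continuousWithinAt
  set G : ℝ → ℝ := fun x => ⟪v x, φ x⟫ with hGdef
  set G' : ℝ → ℝ := fun x => ⟪v x, φ' x⟫ + ⟪h x, φ x⟫ with hG'def
  have hG : ∀ x ∈ Icc (0:ℝ) 1, HasDerivWithinAt G (G' x) (Icc 0 1) x := fun x hx =>
    (hv' x hx).inner ℝ (hφ x hx)
  have hG'cont : ContinuousOn G' (Icc 0 1) :=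
    (hvcont.inner hφ'cont).add (hhcont.inner hφcont)
  have hint : (∫ x in (0:ℝ)..1, G' x) = G 1 - G 0 := by
    refine intervalIntegral.integral_eq_sub_of_hasDeriv_right_of_le zero_le_one
      (hvcont.inner hφcont) (fun x hx => ?_) ?_
    · exact ((hG x ⟨hx.1.le, hx.2.le⟩).hasDerivAt (Icc_mem_nhds hx.1 hx.2)).hasDerivWithinAt
    · exact hG'cont.intervalIntegrable_of_Icc zero_le_one
  have hzero : G 1 - G 0 = 0 := by
    simp [hGdef, hv1, hφ0]
  have hcongr : (∫ x in (0:ℝ)..1, (⟪a x (x / ε) (u x) (b x (x / ε) (u x) (v x)), φ' x⟫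
        + ⟪f x (x / ε) (u x) (b x (x / ε) (u x) (v x)), φ x⟫)) = ∫ x in (0:ℝ)..1, G' x := by
    refine intervalIntegral.integral_congr (fun x hx => ?_)
    have hx' : x ∈ Icc (0:ℝ) 1 := by rwa [uIcc_of_le zero_le_one] at hx
    simp only [hG'def, ← hva x hx']
    have e := hva x hx'
    simp only [hgdef] at e
    rw [← e]
  rw [hcongr, hint, hzero]
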